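/- Let λ > 0, a₂ > 0, a_hom > 0, R > 0 and β < 0 be real numbers, and set k := √(λ/a₂) and κ := √(−β/a_hom). Then the following are equivalent: (1) there exists α ∈ ℝ such that sin(kR) = α·exp(−κR) and √(λ·a₂)·cos(kR) − (a₂/R)·sin(kR) = −α·a_hom·(κ + 1/R)·exp(−κR); (2) sin(kR) ≠ 0 and cos(kR)/sin(kR) + (a_hom − a₂)/(√(λ·a₂)·R) = −√(a_hom·(−β)/(λ·a₂)). -/

import Mathlib

/-- Solvability condition for the interface system for a spherical defect:
the system (6.6)-(6.7) has a solution `α` iff the matching condition (6.8) holds. -/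
theorem interface_system_solvability_iff
    (lam a2 ahom R β : ℝ) (hlam : 0 < lam) (ha2 : 0 < a2) (hahom : 0 < ahom)
    (hR : 0 < R) (hβ : β < 0)
    (k κ : ℝ) (hk : k = Real.sqrt (lam / a2)) (hκ : κ = Real.sqrt (-β / ahom)) :
    (∃ α : ℝ,
        Real.sin (k * R) = α * Real.exp (-κ * R) ∧
        Real.sqrt (lam * a2) * Real.cos (k * R) - (a2 / R) * Real.sin (k * R) =
          -α * ahom * (κ + 1 / R) * Real.exp (-κ * R)) ↔
    (Real.sin (k * R) ≠ 0 ∧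
        Real.cos (k * R) / Real.sin (k * R) + (ahom - a2) / (Real.sqrt (lam * a2) * R) =
          -Real.sqrt (ahom * (-β) / (lam * a2))) := by
  set s := Real.sin (k * R) with hs_def
  set c := Real.cos (k * R) with hc_def
  set S := Real.sqrt (lam * a2) with hS_def
  set E := Real.exp (-κ * R) with hE_def
  have hS : 0 < S := Real.sqrt_pos.2 (by positivity)
  have hE : 0 < E := Real.exp_pos _
  have hκ0 : 0 ≤ κ := hκ ▸ Real.sqrt_nonneg _
  -- key identity: √(ahom*(-β)/(lam*a2)) = ahom*κ/S
  have hkey : Real.sqrt (ahom * (-β) / (lam * a2)) = ahom * κ / S := by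
    have h1 : Real.sqrt (ahom * (-β)) = ahom * κ := by
      rw [hκ, show ahom * (-β) = ahom ^ 2 * (-β / ahom) by field_simp,
        Real.sqrt_mul (by positivity), Real.sqrt_sq hahom.le]
    rw [Real.sqrt_div (by nlinarith), h1]
  have hpyth : s ^ 2 + c ^ 2 = 1 := Real.sin_sq_add_cos_sq _
  constructor
  · rintro ⟨α, h1, h2⟩
    have hs : s ≠ 0 := by
      intro hs0
      have hα : α = 0 := by
        have := h1; rw [hs0] at this
        rcases mul_eq_zero.1 this.symm with h | h
        · exact h
        · exact absurd h hE.ne'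
      rw [hs0, hα] at h2
      simp at h2
      rcases h2 with h | h
      · exact absurd h hS.ne'
      · rw [hs0, h] at hpyth; norm_num at hpyth
    refine ⟨hs, ?_⟩
    rw [hkey]
    have h2' : S * c - a2 / R * s = -(ahom * (κ + 1 / R)) * s := by
      rw [h2, h1]; ring
    field_simp at h2' ⊢
    nlinarith [h2', hS.ne', hR.ne']
  · rintro ⟨hs, heq⟩
    have hEE : Real.exp (κ * R) * E = 1 := by
      rw [hE_def, ← Real.exp_add]; simp
    refine ⟨s * Real.exp (κ * R), ?_, ?_⟩
    · rw [mul_assoc, hEE, mul_one]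
    · rw [show -(s * Real.exp (κ * R)) * ahom * (κ + 1 / R) * E
          = -s * ahom * (κ + 1 / R) * (Real.exp (κ * R) * E) by ring, hEE, mul_one]
      rw [hkey] at heq
      field_simp at heq ⊢
      nlinarith [heq, hS.ne', hR.ne']
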